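/- Let G be a locally compact second countable abelian group, P₀ ⊆ G a U-uniformly discrete set, and V ⊆ G a non-empty open m_G-Jordan measurable set with closure(V) − closure(V) ⊆ U. Then for every G-invariant Borel probability measure μ on the hull Ω_{P₀}, the open set O_V = {P ∈ Ω_{P₀} : P ∩ V ≠ ∅} is μ-Jordan measurable, i.e. μ(interior of O_V) = μ(closure of O_V). -/

import Mathlib

open scoped Pointwise
open Set MeasureTheory

/-- The Chabauty–Fell topology on the space of subsets of `G`, generated by the sets
`{A : A ∩ U ≠ ∅}` for `U` open and `{A : A ∩ K = ∅}` for `K` compact. -/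
def chabautyTop (G : Type*) [TopologicalSpace G] : TopologicalSpace (Set G) :=
  TopologicalSpace.generateFrom
    ({S | ∃ U : Set G, IsOpen U ∧ S = {A : Set G | (A ∩ U).Nonempty}} ∪
     {S | ∃ K : Set G, IsCompact K ∧ S = {A : Set G | A ∩ K = ∅}})

/-- The Borel σ-algebra of the Chabauty topology. -/
noncomputable def chabautyBorel (G : Type*) [TopologicalSpace G] : MeasurableSpace (Set G) :=
  @borel (Set G) (chabautyTop G)

open TopologicalSpace Topology

set_option linter.unusedSectionVars false

section Aux

variable {G : Type*} [AddCommGroup G] [TopologicalSpace G] [IsTopologicalAddGroup G]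

theorem chab_isOpen_hit {W : Set G} (hW : IsOpen W) :
    IsOpen[chabautyTop G] {A : Set G | (A ∩ W).Nonempty} :=
  TopologicalSpace.isOpen_generateFrom_of_mem (Or.inl ⟨W, hW, rfl⟩)

theorem chab_isOpen_miss {K : Set G} (hK : IsCompact K) :
    IsOpen[chabautyTop G] {A : Set G | A ∩ K = ∅} :=
  TopologicalSpace.isOpen_generateFrom_of_mem (Or.inr ⟨K, hK, rfl⟩)

theorem mem_translate {A : Set G} {g x : G} : x ∈ A - ({g} : Set G) ↔ x + g ∈ A := by
  rw [Set.sub_singleton]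
  constructor
  · rintro ⟨a, ha, rfl⟩; simpa using ha
  · intro h; exact ⟨x + g, h, by simp⟩

theorem chabTrans_trans (A : Set G) (g h : G) :
    (A - ({g} : Set G)) - ({h} : Set G) = A - ({g + h} : Set G) := by
  ext x
  simp only [mem_translate]
  rw [add_assoc, add_comm h g]

theorem chabTrans_zero (A : Set G) : A - ({0} : Set G) = A := by
  ext x; simp [mem_translate]

theorem chab_continuous_translate (g : G) :
    Continuous[chabautyTop G, chabautyTop G] (fun A : Set G => A - ({g} : Set G)) := by
  rw [show chabautyTop G = TopologicalSpace.generateFrom _ from rfl, continuous_generateFrom_iff]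
  rintro S (⟨W, hW, rfl⟩ | ⟨K, hK, rfl⟩)
  · have h1 : (fun A : Set G => A - ({g} : Set G)) ⁻¹' {A | (A ∩ W).Nonempty}
        = {A : Set G | (A ∩ ((fun x : G => x - g) ⁻¹' W)).Nonempty} := by
      ext A
      simp only [mem_preimage, mem_setOf_eq]
      constructor
      · rintro ⟨x, hx, hxW⟩
        exact ⟨x + g, mem_translate.1 hx, by simpa using hxW⟩
      · rintro ⟨a, ha, haW⟩
        exact ⟨a - g, mem_translate.2 (by simpa using ha), haW⟩
    rw [h1]
    exact chab_isOpen_hit (hW.preimage (continuous_sub_right g))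
  · have h1 : (fun A : Set G => A - ({g} : Set G)) ⁻¹' {A | A ∩ K = ∅}
        = {A : Set G | A ∩ ((fun x : G => x + g) '' K) = ∅} := by
      ext A
      simp only [mem_preimage, mem_setOf_eq, eq_empty_iff_forall_notMem]
      constructor
      · intro h x hx
        obtain ⟨hxA, k, hk, rfl⟩ := hx
        exact h (k) ⟨mem_translate.2 (by simpa using hxA), hk⟩
      · intro h x hx
        obtain ⟨hxA, hxK⟩ := hx
        exact h (x + g) ⟨mem_translate.1 hxA, ⟨x, hxK, rfl⟩⟩
    rw [h1]
    exact chab_isOpen_miss (hK.image (continuous_add_right g))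

noncomputable def chabTranslateHomeo (g : G) :
    @Homeomorph (Set G) (Set G) (chabautyTop G) (chabautyTop G) :=
  letI := chabautyTop G
  { toFun := fun A => A - ({g} : Set G)
    invFun := fun A => A - ({-g} : Set G)
    left_inv := fun A => by
      show (A - ({g} : Set G)) - ({-g} : Set G) = A
      rw [chabTrans_trans]; simp [chabTrans_zero]
    right_inv := fun A => by
      show (A - ({-g} : Set G)) - ({g} : Set G) = A
      rw [chabTrans_trans]; simp [chabTrans_zero]
    continuous_toFun := chab_continuous_translate g
    continuous_invFun := chab_continuous_translate (-g) }

theorem translate_preimage_hull (P₀ : Set G) (g : G) :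
    (fun A : Set G => A - ({g} : Set G)) ⁻¹'
      (@closure (Set G) (chabautyTop G) (Set.range fun h : G => P₀ - ({h} : Set G))) =
      @closure (Set G) (chabautyTop G) (Set.range fun h : G => P₀ - ({h} : Set G)) := by
  letI := chabautyTop G
  have h1 : (fun A : Set G => A - ({g} : Set G)) = (chabTranslateHomeo g : Set G → Set G) := rfl
  rw [h1, (chabTranslateHomeo (G := G) g).preimage_closure]
  have hrange : (chabTranslateHomeo (G := G) g) ⁻¹' (Set.range fun h : G => P₀ - ({h} : Set G))
      = Set.range fun h : G => P₀ - ({h} : Set G) := by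
    ext A
    rw [mem_preimage]
    simp only [mem_range]
    constructor
    · rintro ⟨h, hh⟩
      refine ⟨h + -g, ?_⟩
      have hthis : P₀ - ({h} : Set G) = (chabTranslateHomeo (G := G) g) A := hh
      have h2 : A = (P₀ - ({h} : Set G)) - ({-g} : Set G) := by
        rw [hthis]
        exact ((chabTranslateHomeo (G := G) g).left_inv A).symm
      rw [chabTrans_trans] at h2
      exact h2.symm
    · rintro ⟨h, hh⟩
      refine ⟨h + g, ?_⟩
      show P₀ - ({h + g} : Set G) = A - ({g} : Set G)
      rw [← hh, chabTrans_trans]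
  rw [hrange]

theorem sub_open_pair {a b : G} {O : Set G} (hO : IsOpen O) (hab : a - b ∈ O) :
    ∃ W₁ W₂ : Set G, IsOpen W₁ ∧ IsOpen W₂ ∧ a ∈ W₁ ∧ b ∈ W₂ ∧
      ∀ x ∈ W₁, ∀ y ∈ W₂, x - y ∈ O := by
  have hc : IsOpen ((fun p : G × G => p.1 - p.2) ⁻¹' O) := hO.preimage continuous_sub
  obtain ⟨W₁, W₂, h1, h2, h3, h4, h5⟩ := isOpen_prod_iff.1 hc a b hab
  exact ⟨W₁, W₂, h1, h2, h3, h4, fun x hx y hy => h5 (mk_mem_prod hx hy)⟩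

theorem chab_isClosed_discrete [T1Space G] {U : Set G} (hUo : IsOpen U) :
    IsClosed[chabautyTop G] {A : Set G | (A - A) ∩ U ⊆ {0}} := by
  letI := chabautyTop G
  rw [← isOpen_compl_iff]
  rw [isOpen_iff_forall_mem_open]
  intro A hA
  rw [mem_compl_iff, mem_setOf_eq] at hA
  obtain ⟨x, hx, hx0⟩ := not_subset.1 hA
  obtain ⟨hxAA, hxU⟩ := hx
  rw [Set.mem_sub] at hxAA
  obtain ⟨a, ha, b, hb, rfl⟩ := hxAA
  rw [mem_singleton_iff] at hx0
  have hmem : a - b ∈ U ∩ ({0}ᶜ : Set G) := ⟨hxU, hx0⟩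
  obtain ⟨W₁, W₂, hW₁, hW₂, haW, hbW, hsub⟩ :=
    sub_open_pair (hUo.inter (isClosed_singleton.isOpen_compl)) hmem
  refine ⟨{A' : Set G | (A' ∩ W₁).Nonempty} ∩ {A' : Set G | (A' ∩ W₂).Nonempty}, ?_, ?_, ?_⟩
  · rintro A' ⟨⟨x, hxA', hxW⟩, ⟨y, hyA', hyW⟩⟩
    rw [mem_compl_iff, mem_setOf_eq]
    intro hcon
    have h1 : x - y ∈ (A' - A') ∩ U := ⟨Set.sub_mem_sub hxA' hyA', (hsub x hxW y hyW).1⟩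
    have h2 := hcon h1
    rw [mem_singleton_iff] at h2
    exact (hsub x hxW y hyW).2 (by rw [h2]; rfl)
  · exact (chab_isOpen_hit hW₁).inter (chab_isOpen_hit hW₂)
  · exact ⟨⟨a, ha, haW⟩, ⟨b, hb, hbW⟩⟩

theorem hull_discrete [T1Space G] {U P₀ : Set G} (hUo : IsOpen U)
    (hud : (P₀ - P₀) ∩ U = {0}) {A : Set G}
    (hA : A ∈ @closure (Set G) (chabautyTop G)
      (Set.range fun h : G => P₀ - ({h} : Set G))) :
    (A - A) ∩ U ⊆ {0} := by
  letI := chabautyTop G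
  have hsub : Set.range (fun h : G => P₀ - ({h} : Set G)) ⊆ {A : Set G | (A - A) ∩ U ⊆ {0}} := by
    rintro _ ⟨h, rfl⟩
    rintro x ⟨hx1, hx2⟩
    rw [Set.mem_sub] at hx1
    obtain ⟨a, ha, b, hb, rfl⟩ := hx1
    rw [mem_translate] at ha hb
    have : a - b ∈ P₀ - P₀ := by
      have := Set.sub_mem_sub ha hb
      simpa [add_sub_add_right_eq_sub] using this
    rw [← hud]
    exact ⟨this, hx2⟩
  exact closure_minimal hsub (chab_isClosed_discrete hUo) hA

theorem chab_closure_discrete [T2Space G] {U A : Set G} (hUo : IsOpen U)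
    (hA : (A - A) ∩ U ⊆ {0}) : (closure A - closure A) ∩ U ⊆ {0} := by
  rintro x ⟨hxAA, hxU⟩
  rw [Set.mem_sub] at hxAA
  obtain ⟨a, ha, b, hb, rfl⟩ := hxAA
  rw [mem_singleton_iff, sub_eq_zero]
  by_contra hab
  obtain ⟨Oa, Ob, hOa, hOb, haO, hbO, hdisj⟩ := t2_separation hab
  obtain ⟨W₁, W₂, hW₁, hW₂, haW, hbW, hsub⟩ := sub_open_pair hUo hxU
  obtain ⟨a', ha'⟩ := mem_closure_iff.1 ha (W₁ ∩ Oa) (hW₁.inter hOa) ⟨haW, haO⟩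
  obtain ⟨b', hb'⟩ := mem_closure_iff.1 hb (W₂ ∩ Ob) (hW₂.inter hOb) ⟨hbW, hbO⟩
  have h1 : a' - b' ∈ (A - A) ∩ U :=
    ⟨Set.sub_mem_sub ha'.2 hb'.2, hsub a' ha'.1.1 b' hb'.1.1⟩
  have h2 := hA h1
  rw [mem_singleton_iff, sub_eq_zero] at h2
  exact Set.disjoint_iff.1 hdisj ⟨ha'.1.2, h2 ▸ hb'.1.2⟩ 

theorem discrete_countable [SecondCountableTopology G] {U A : Set G}
    (hU : U ∈ nhds (0 : G)) (hA : (A - A) ∩ U ⊆ {0}) : A.Countable := by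
  have hc : ContinuousAt (fun p : G × G => p.1 - p.2) (0, 0) := continuous_sub.continuousAt
  have hpre : (fun p : G × G => p.1 - p.2) ⁻¹' U ∈ nhds ((0, 0) : G × G) :=
    hc.preimage_mem_nhds (by simpa using hU)
  rw [nhds_prod_eq, Filter.mem_prod_iff] at hpre
  obtain ⟨t₁, ht₁, t₂, ht₂, hts⟩ := hpre
  obtain ⟨U₁, hU₁sub, hU₁o, hU₁0⟩ := mem_nhds_iff.1 (Filter.inter_mem ht₁ ht₂)
  have hpd : A.PairwiseDisjoint (fun a : G => (fun x : G => x - a) ⁻¹' U₁) := by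
    intro a ha b hb hab
    rw [Function.onFun, Set.disjoint_left]
    intro x hxa hxb
    have h1 : ((x - b, x - a) : G × G) ∈ t₁ ×ˢ t₂ :=
      ⟨(hU₁sub hxb).1, (hU₁sub hxa).2⟩
    have h2 : (x - b) - (x - a) ∈ U := hts h1
    have h3 : a - b ∈ (A - A) ∩ U := by
      rw [sub_sub_sub_cancel_left] at h2
      exact ⟨Set.sub_mem_sub ha hb, h2⟩
    have := hA h3
    rw [mem_singleton_iff, sub_eq_zero] at this
    exact hab this
  exact hpd.countable_of_isOpen
    (fun a _ => hU₁o.preimage (continuous_sub_right a))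
    (fun a _ => ⟨a, by simpa using hU₁0⟩)

theorem exists_shrinking {X : Type*} [TopologicalSpace X] [WeaklyLocallyCompactSpace X]
    [T2Space X] [TopologicalSpace.MetrizableSpace X] {D : Set X} (hD : IsCompact D) :
    ∃ W : ℕ → Set X, (∀ n, IsOpen (W n)) ∧ (∀ n, D ⊆ W n) ∧ (∀ n, W (n + 1) ⊆ W n) ∧
      (∀ n, IsCompact (closure (W n))) ∧ (⋂ n, closure (W n)) = D := by
  letI : MetricSpace X := TopologicalSpace.metrizableSpaceMetric X
  obtain ⟨K, hKc, hDK⟩ := exists_compact_superset hD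
  refine ⟨fun n => interior K ∩ Metric.thickening (1 / (n + 1)) D, fun n => ?_, fun n => ?_,
    fun n => ?_, fun n => ?_, ?_⟩
  · exact isOpen_interior.inter Metric.isOpen_thickening
  · exact subset_inter hDK (Metric.self_subset_thickening (by positivity) D)
  · refine inter_subset_inter_right _ (Metric.thickening_mono ?_ D)
    apply one_div_le_one_div_of_le <;> [positivity; (push_cast; linarith)]
  · refine hKc.of_isClosed_subset isClosed_closure ?_
    refine closure_minimal ?_ hKc.isClosed
    exact (inter_subset_left).trans interior_subset
  · refine Subset.antisymm ?_ ?_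
    · intro x hx
      rw [mem_iInter] at hx
      have hxn : ∀ n : ℕ, x ∈ Metric.cthickening (1 / (n + 1)) D := by
        intro n
        have h1 : closure (interior K ∩ Metric.thickening (1 / (n + 1 : ℝ)) D)
            ⊆ Metric.cthickening (1 / (n + 1)) D := by
          refine closure_minimal ?_ Metric.isClosed_cthickening
          exact inter_subset_right.trans (Metric.thickening_subset_cthickening _ _)
        exact h1 (hx n)
      have hxc : x ∈ closure D := by
        rw [Metric.closure_eq_iInter_cthickening]
        simp only [mem_iInter]
        intro δ hδ
        obtain ⟨n, hn⟩ := exists_nat_one_div_lt hδ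
        exact Metric.cthickening_mono hn.le D (hxn n)
      rwa [hD.isClosed.closure_eq] at hxc
    · intro x hx
      rw [mem_iInter]
      intro n
      exact subset_closure ⟨hDK hx, Metric.self_subset_thickening (by positivity) D hx⟩

/-- The set of pairs `(g, A)` such that `A` meets `W + g`. -/
def hitSet {G : Type*} [AddCommGroup G] (W : Set G) : Set (G × Set G) :=
  {p : G × Set G | ∃ x ∈ p.2, x - p.1 ∈ W}

theorem hitSet_eq_iUnion [T2Space G] [LocallyCompactSpace G] [SecondCountableTopology G]
    {W : Set G} (hW : IsOpen W) :
    hitSet W = ⋃ b ∈ countableBasis G,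
      ({g : G | IsCompact (closure b) ∧ ∀ x ∈ closure b, x - g ∈ W} ×ˢ
        {A : Set G | (A ∩ b).Nonempty}) := by
  ext ⟨g, A⟩
  simp only [hitSet, mem_setOf_eq, mem_iUnion, mem_prod, exists_prop]
  constructor
  · rintro ⟨x, hxA, hxW⟩
    obtain ⟨K, hKc, hxK, hKW⟩ :=
      exists_compact_subset (hW.preimage (continuous_sub_right g)) hxW
    obtain ⟨b, hb, hxb, hbK⟩ :=
      (isBasis_countableBasis G).exists_subset_of_mem_open hxK isOpen_interior
    have hbcl : closure b ⊆ K :=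
      closure_minimal (hbK.trans interior_subset) hKc.isClosed
    refine ⟨b, hb, ⟨⟨hKc.of_isClosed_subset isClosed_closure hbcl, ?_⟩, ⟨x, hxA, hxb⟩⟩⟩
    intro y hy
    exact hKW (hbcl hy)
  · rintro ⟨b, hb, ⟨⟨hbc, hbW⟩, x, hxA, hxb⟩⟩
    exact ⟨x, hxA, hbW x (subset_closure hxb)⟩

theorem isOpen_transSet {W : Set G} (hW : IsOpen W) (b : Set G) :
    IsOpen {g : G | IsCompact (closure b) ∧ ∀ x ∈ closure b, x - g ∈ W} := by
  by_cases hb : IsCompact (closure b)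
  · have heq : {g : G | IsCompact (closure b) ∧ ∀ x ∈ closure b, x - g ∈ W}
        = {g : G | ∀ x ∈ closure b, x - g ∈ W} := by
      ext g; simp [hb]
    rw [heq, isOpen_iff_forall_mem_open]
    intro g₀ hg₀
    have hC' : IsCompact ((fun x : G => x - g₀) '' closure b) :=
      hb.image (continuous_sub_right g₀)
    have hC'W : (fun x : G => x - g₀) '' closure b ⊆ W := by
      rintro _ ⟨x, hx, rfl⟩; exact hg₀ x hx
    obtain ⟨N, hN, hNsub⟩ := compact_open_separated_add_right hC' hW hC'W
    obtain ⟨N', hN'sub, hN'o, hN'0⟩ := mem_nhds_iff.1 hN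
    refine ⟨(fun g : G => g₀ - g) ⁻¹' N', ?_, hN'o.preimage (continuous_const.sub continuous_id),
      by simpa using hN'0⟩
    intro g hg
    rw [mem_setOf_eq]
    intro x hx
    have : (x - g₀) + (g₀ - g) ∈ W := hNsub (Set.add_mem_add ⟨x, hx, rfl⟩ (hN'sub hg))
    simpa [sub_add_sub_cancel] using this
  · have heq : {g : G | IsCompact (closure b) ∧ ∀ x ∈ closure b, x - g ∈ W} = ∅ := by
      ext g; simp [hb]
    rw [heq]; exact isOpen_empty

theorem measurableSet_hitSet [T2Space G] [LocallyCompactSpace G] [SecondCountableTopology G]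
    [MeasurableSpace G] [BorelSpace G] {W : Set G} (hW : IsOpen W) :
    @MeasurableSet (G × Set G)
      (@Prod.instMeasurableSpace G (Set G) _ (chabautyBorel G)) (hitSet W) := by
  letI : TopologicalSpace (Set G) := chabautyTop G
  letI : MeasurableSpace (Set G) := chabautyBorel G
  haveI : BorelSpace (Set G) := ⟨rfl⟩
  rw [hitSet_eq_iUnion hW]
  refine MeasurableSet.biUnion (countable_countableBasis G) fun b _ => ?_
  exact ((isOpen_transSet hW b).measurableSet).prod
    ((chab_isOpen_hit (isOpen_of_mem_countableBasis ‹b ∈ countableBasis G›)).measurableSet)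

end Aux

/-- Jordan measurability of the transversal neighbourhoods `O_V`: if `P₀` is `U`-uniformly
discrete (with `U` open and bounded), `V` is a nonempty open `m_G`-Jordan measurable set with
`closure V - closure V ⊆ U`, `Ω` is the hull of `P₀` (the Chabauty orbit closure), and `μ` is a
`G`-invariant Borel probability measure on `Ω`, then `O_V = {P ∈ Ω : P ∩ V ≠ ∅}` is `μ`-Jordan
measurable: `μ` of its (relative) interior `O_V` equals `μ` of its closure. -/
theorem stmt19 {G : Type*} [AddCommGroup G] [TopologicalSpace G] [IsTopologicalAddGroup G]
    [LocallyCompactSpace G] [SecondCountableTopology G] [MeasurableSpace G] [BorelSpace G]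
    (μG : Measure G) [μG.IsAddHaarMeasure]
    (U : Set G) (hUo : IsOpen U) (hU0 : (0 : G) ∈ U) (hUb : IsCompact (closure U))
    (P₀ : Set G) (hcl : IsClosed P₀) (hud : (P₀ - P₀) ∩ U = {0})
    (V : Set G) (hVo : IsOpen V) (hVne : V.Nonempty)
    (hVJ : μG V = μG (closure V))
    (hVU : closure V - closure V ⊆ U)
    (μ : @Measure (Set G) (chabautyBorel G))
    (hprob : @IsProbabilityMeasure (Set G) (chabautyBorel G) μ)
    (hinv : ∀ g : G,
      @Measure.map (Set G) (Set G) (chabautyBorel G) (chabautyBorel G)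
        (fun A : Set G => A - ({g} : Set G)) μ = μ)
    (hhull : μ (@closure (Set G) (chabautyTop G)
        (Set.range fun g : G => P₀ - ({g} : Set G)))ᶜ = 0) :
    μ ({A : Set G | (A ∩ V).Nonempty} ∩
        @closure (Set G) (chabautyTop G) (Set.range fun g : G => P₀ - ({g} : Set G))) =
      μ (@closure (Set G) (chabautyTop G)
        ({A : Set G | (A ∩ V).Nonempty} ∩
          @closure (Set G) (chabautyTop G) (Set.range fun g : G => P₀ - ({g} : Set G)))) := by
  letI : TopologicalSpace (Set G) := chabautyTop G
  letI : MeasurableSpace (Set G) := chabautyBorel G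
  haveI : BorelSpace (Set G) := ⟨rfl⟩
  haveI hprob' : IsProbabilityMeasure μ := hprob
  -- `P₀` is nonempty
  have hP₀ne : P₀.Nonempty := by
    by_contra hne
    rw [not_nonempty_iff_eq_empty] at hne
    rw [hne] at hud
    simp only [Set.sub_empty, Set.empty_sub, Set.empty_inter] at hud
    exact (Set.singleton_ne_empty (0 : G)) hud.symm
  -- `{0}` is closed, hence `G` is `T2`
  have h0closed : IsClosed ({0} : Set G) := by
    have hsub0 : closure ({0} : Set G) ⊆ {0} := by
      intro x hx
      have hxall : ∀ W : Set G, IsOpen W → (0 : G) ∈ W → x ∈ W := by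
        intro W hWo hW0
        have h1 : IsOpen ((fun y : G => x - y) ⁻¹' W) :=
          hWo.preimage (continuous_const.sub continuous_id)
        have h2 : x ∈ (fun y : G => x - y) ⁻¹' W := by
          simp only [mem_preimage, sub_self]; exact hW0
        obtain ⟨y, hyW, hy0⟩ := mem_closure_iff.1 hx _ h1 h2
        rw [mem_singleton_iff] at hy0
        subst hy0
        simpa using hyW
      have hsym : ∀ W : Set G, IsOpen W → x ∈ W → (0 : G) ∈ W := by
        intro W hWo hxW
        have h1 : IsOpen ((fun y : G => x - y) ⁻¹' W) :=
          hWo.preimage (continuous_const.sub continuous_id)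
        have h2 : (0 : G) ∈ (fun y : G => x - y) ⁻¹' W := by simpa using hxW
        have h3 := hxall _ h1 h2
        simpa using h3
      obtain ⟨p, hp⟩ := hP₀ne
      have hpx : p + x ∈ P₀ := by
        have h3 : p + x ∈ closure ({p} : Set G) := by
          rw [mem_closure_iff]
          intro o ho hmem
          refine ⟨p, ?_, rfl⟩
          have h4 : IsOpen ((fun y : G => p + y) ⁻¹' o) :=
            ho.preimage (continuous_const.add continuous_id)
          have h5 : x ∈ (fun y : G => p + y) ⁻¹' o := hmem
          have h6 := hsym _ h4 h5
          simpa using h6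
        exact closure_minimal (singleton_subset_iff.2 hp) hcl h3
      have hxPP : x ∈ (P₀ - P₀) ∩ U := by
        refine ⟨?_, hxall U hUo hU0⟩
        rw [Set.mem_sub]
        exact ⟨p + x, hpx, p, hp, by abel⟩
      rw [hud] at hxPP
      exact hxPP
    exact isClosed_of_closure_subset hsub0
  haveI hT2 : T2Space G := IsTopologicalAddGroup.t2Space_iff_zero_closed.2 h0closed
  show μ ({A : Set G | (A ∩ V).Nonempty} ∩
        closure (Set.range fun g : G => P₀ - ({g} : Set G))) =
      μ (closure ({A : Set G | (A ∩ V).Nonempty} ∩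
          closure (Set.range fun g : G => P₀ - ({g} : Set G))))
  set Ω : Set (Set G) := closure (Set.range fun g : G => P₀ - ({g} : Set G)) with hΩdef
  set O : Set (Set G) := {A : Set G | (A ∩ V).Nonempty} with hOdef
  have hΩclosed : IsClosed Ω := isClosed_closure
  -- compactness of `closure V`
  obtain ⟨v, hv⟩ := hVne
  have hclV : IsCompact (closure V) := by
    refine (hUb.image (continuous_add_right v)).of_isClosed_subset isClosed_closure ?_
    intro x hx
    exact ⟨x - v, subset_closure (hVU (Set.sub_mem_sub hx (subset_closure hv))),
      sub_add_cancel x v⟩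
  set D : Set G := closure V \ V with hDdef
  have hDclosed : IsClosed D := isClosed_closure.sdiff hVo
  have hDcpt : IsCompact D := hclV.of_isClosed_subset hDclosed diff_subset
  have hVfin : μG V ≠ ⊤ := ((measure_mono subset_closure).trans_lt hclV.measure_lt_top).ne
  have hDnull : μG D = 0 := by
    rw [hDdef, measure_diff (subset_closure : V ⊆ closure V)
      hVo.measurableSet.nullMeasurableSet hVfin, ← hVJ, tsub_self]
  have hΩdisc : ∀ A ∈ Ω, (A - A) ∩ U ⊆ {0} := fun A hA => hull_discrete hUo hud hA
  -- covering of the closure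
  have hScover : closure (O ∩ Ω) ⊆ (O ∩ Ω) ∪ ({A : Set G | ∃ x ∈ closure A, x ∈ D} ∩ Ω) := by
    intro A hA
    have hAΩ : A ∈ Ω := closure_minimal inter_subset_right hΩclosed hA
    have hAclV : (A ∩ closure V).Nonempty := by
      have hcl2 : IsClosed {B : Set G | (B ∩ closure V).Nonempty} := by
        have heq : {B : Set G | (B ∩ closure V).Nonempty} = {B : Set G | B ∩ closure V = ∅}ᶜ := by
          ext B; simp [nonempty_iff_ne_empty]
        rw [heq]
        exact (chab_isOpen_miss hclV).isClosed_compl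
      refine closure_minimal ?_ hcl2 hA
      rintro B ⟨⟨x, hx1, hx2⟩, -⟩
      exact ⟨x, hx1, subset_closure hx2⟩
    obtain ⟨x, hxA, hxclV⟩ := hAclV
    by_cases hxV : x ∈ V
    · exact Or.inl ⟨⟨x, hxA, hxV⟩, hAΩ⟩
    · exact Or.inr ⟨⟨x, subset_closure hxA, ⟨hxclV, hxV⟩⟩, hAΩ⟩
  -- the null set
  have hSnull : μ ({A : Set G | ∃ x ∈ closure A, x ∈ D} ∩ Ω) = 0 := by
    obtain ⟨W, hWo, hWD, hWmono, hWcpt, hWinter⟩ := exists_shrinking hDcpt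
    set E : Set (G × Set G) := (⋂ n, hitSet (W n)) ∩ ((univ : Set G) ×ˢ Ω) with hEdef
    have hEmeas : MeasurableSet E := by
      refine MeasurableSet.inter ?_ (MeasurableSet.univ.prod hΩclosed.measurableSet)
      exact MeasurableSet.iInter fun n => measurableSet_hitSet (hWo n)
    have hEmem : ∀ (g : G) (A : Set G),
        (g, A) ∈ E ↔ (∀ n, ∃ x ∈ A, x - g ∈ W n) ∧ A ∈ Ω := by
      intro g A
      rw [hEdef]
      simp only [mem_inter_iff, mem_iInter, mem_prod, mem_univ, true_and]
      exact Iff.rfl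
    have hEsec : ∀ g : G, Prod.mk g ⁻¹' E
        = ({A : Set G | ∃ x ∈ closure A, x - g ∈ D} ∩ Ω) := by
      intro g
      ext A
      rw [mem_preimage, hEmem g A, mem_inter_iff, mem_setOf_eq]
      constructor
      · rintro ⟨hall, hAΩ⟩
        refine ⟨?_, hAΩ⟩
        set C : ℕ → Set G := fun n => closure A ∩ ((fun x : G => x - g) ⁻¹' closure (W n))
          with hCdef
        have hCne : ∀ n, (C n).Nonempty := by
          intro n
          obtain ⟨x, hxA, hxW⟩ := hall n
          exact ⟨x, subset_closure hxA, subset_closure hxW⟩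
        have hCcl : ∀ n, IsClosed (C n) := fun n =>
          isClosed_closure.inter (isClosed_closure.preimage (continuous_sub_right g))
        have hCmono : ∀ n, C (n + 1) ⊆ C n := fun n =>
          inter_subset_inter_right _ (preimage_mono (closure_mono (hWmono n)))
        have hC0 : IsCompact (C 0) := by
          have himg : (fun x : G => x - g) ⁻¹' closure (W 0)
              = (fun x : G => x + g) '' closure (W 0) := by
            ext z
            simp only [mem_preimage, mem_image]
            constructor
            · intro h; exact ⟨z - g, h, sub_add_cancel z g⟩
            · rintro ⟨y, hy, rfl⟩; simpa using hy
          have hsub0 : C 0 ⊆ (fun x : G => x + g) '' closure (W 0) := by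
            rw [hCdef]
            exact inter_subset_right.trans (by rw [himg])
          exact ((hWcpt 0).image (continuous_add_right g)).of_isClosed_subset (hCcl 0) hsub0
        obtain ⟨x, hx⟩ := IsCompact.nonempty_iInter_of_sequence_nonempty_isCompact_isClosed
          C hCmono hCne hC0 hCcl
        rw [mem_iInter] at hx
        refine ⟨x, (hx 0).1, ?_⟩
        have hxi : x - g ∈ ⋂ n, closure (W n) := mem_iInter.2 fun n => (hx n).2
        rwa [hWinter] at hxi
      · rintro ⟨⟨x, hxA, hxD⟩, hAΩ⟩
        refine ⟨fun n => ?_, hAΩ⟩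
        have h1 : IsOpen ((fun y : G => y - g) ⁻¹' W n) :=
          (hWo n).preimage (continuous_sub_right g)
        have h2 : x ∈ (fun y : G => y - g) ⁻¹' W n := hWD n hxD
        obtain ⟨y, hy1, hy2⟩ := mem_closure_iff.1 hxA _ h1 h2
        exact ⟨y, hy2, hy1⟩
    have hTmeas : ∀ g : G, Measurable (fun A : Set G => A - ({g} : Set G)) := fun g =>
      (chab_continuous_translate g).measurable
    have hsec0 : MeasurableSet (Prod.mk (0 : G) ⁻¹' E) := hEmeas.preimage measurable_prodMk_left
    have hconst : ∀ g : G, μ (Prod.mk g ⁻¹' E) = μ (Prod.mk (0 : G) ⁻¹' E) := by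
      intro g
      have hΩinv : (fun A : Set G => A - ({g} : Set G)) ⁻¹' Ω = Ω := translate_preimage_hull P₀ g
      have hpre : (fun A : Set G => A - ({g} : Set G)) ⁻¹' (Prod.mk (0 : G) ⁻¹' E)
          = Prod.mk g ⁻¹' E := by
        rw [hEsec 0, hEsec g]
        ext A
        rw [mem_preimage, mem_inter_iff, mem_inter_iff, mem_setOf_eq, mem_setOf_eq]
        have hclosA : closure (A - ({g} : Set G)) = (fun y : G => y - g) '' closure A := by
          rw [Set.sub_singleton]
          exact ((Homeomorph.subRight g).image_closure A).symm
        constructor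
        · rintro ⟨⟨x, hx, hxD⟩, hΩ'⟩
          rw [hclosA] at hx
          obtain ⟨y, hy, rfl⟩ := hx
          refine ⟨⟨y, hy, by simpa using hxD⟩, ?_⟩
          have hmem : A ∈ (fun A : Set G => A - ({g} : Set G)) ⁻¹' Ω := hΩ'
          rwa [hΩinv] at hmem
        · rintro ⟨⟨x, hx, hxD⟩, hΩ'⟩
          refine ⟨⟨x - g, ?_, by simpa using hxD⟩, ?_⟩
          · rw [hclosA]; exact ⟨x, hx, rfl⟩
          · have hmem : A ∈ (fun A : Set G => A - ({g} : Set G)) ⁻¹' Ω := by rwa [hΩinv]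
            exact hmem
      calc μ (Prod.mk g ⁻¹' E)
          = μ ((fun A : Set G => A - ({g} : Set G)) ⁻¹' (Prod.mk (0 : G) ⁻¹' E)) := by rw [hpre]
        _ = (μ.map (fun A : Set G => A - ({g} : Set G))) (Prod.mk (0 : G) ⁻¹' E) :=
            (Measure.map_apply (hTmeas g) hsec0).symm
        _ = μ (Prod.mk (0 : G) ⁻¹' E) := by rw [hinv g]
    set ν : Measure G := μG.map (fun g : G => -g) with hνdef
    have hsecAnull : ∀ A : Set G, ν ((fun g : G => (g, A)) ⁻¹' E) = 0 := by
      intro A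
      by_cases hAΩ : A ∈ Ω
      · have hsecdesc : (fun g : G => (g, A)) ⁻¹' E
            = {g : G | ∃ x ∈ closure A, x - g ∈ D} := by
          ext g
          rw [mem_preimage]
          have h1 : (g, A) ∈ E ↔ A ∈ Prod.mk g ⁻¹' E := Iff.rfl
          rw [h1, hEsec g]
          simp [hAΩ]
        rw [hsecdesc]
        have hcnt : (closure A).Countable :=
          discrete_countable (hUo.mem_nhds hU0) (chab_closure_discrete hUo (hΩdisc A hAΩ))
        have hrw : {g : G | ∃ x ∈ closure A, x - g ∈ D}
            = ⋃ x ∈ closure A, (fun g : G => x - g) ⁻¹' D := by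
          ext g
          simp only [mem_setOf_eq, mem_iUnion, mem_preimage, exists_prop]
        rw [hrw, measure_biUnion_null_iff hcnt]
        intro x _
        have hmeasD : MeasurableSet ((fun g : G => x - g) ⁻¹' D) :=
          hDclosed.measurableSet.preimage (measurable_const.sub measurable_id)
        rw [hνdef, Measure.map_apply measurable_neg hmeasD]
        have hpr : (fun g : G => -g) ⁻¹' ((fun g : G => x - g) ⁻¹' D)
            = (fun g : G => x + g) ⁻¹' D := by
          ext z
          simp [sub_neg_eq_add]
        rw [hpr, measure_preimage_add]
        exact hDnull
      · have hsecdesc : (fun g : G => (g, A)) ⁻¹' E = ∅ := by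
          ext g
          rw [mem_preimage]
          have h1 : (g, A) ∈ E ↔ A ∈ Prod.mk g ⁻¹' E := Iff.rfl
          rw [h1, hEsec g]
          simp [hAΩ]
        rw [hsecdesc]
        simp
    haveI hμGsf : SigmaFinite μG := by infer_instance
    haveI hνsf : SigmaFinite ν := by
      have hcoe : ν = μG.map (MeasurableEquiv.neg G) := rfl
      rw [hcoe]
      exact (MeasurableEquiv.neg G).sigmaFinite_map
    have htonelli1 : (ν.prod μ) E = ∫⁻ g, μ (Prod.mk g ⁻¹' E) ∂ν := Measure.prod_apply hEmeas
    have htonelli2 : (ν.prod μ) E = ∫⁻ A, ν ((fun g : G => (g, A)) ⁻¹' E) ∂μ :=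
      Measure.prod_apply_symm hEmeas
    have hz : (ν.prod μ) E = 0 := by
      rw [htonelli2]
      have : ∀ A : Set G, ν ((fun g : G => (g, A)) ⁻¹' E) = 0 := hsecAnull
      simp only [this]
      exact lintegral_zero
    have hconst0 : μ (Prod.mk (0 : G) ⁻¹' E) * ν univ = 0 := by
      calc μ (Prod.mk (0 : G) ⁻¹' E) * ν univ
          = ∫⁻ _, μ (Prod.mk (0 : G) ⁻¹' E) ∂ν := (lintegral_const _).symm
        _ = ∫⁻ g, μ (Prod.mk g ⁻¹' E) ∂ν := lintegral_congr fun g => (hconst g).symm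
        _ = (ν.prod μ) E := htonelli1.symm
        _ = 0 := hz
    have hνuniv : ν univ ≠ 0 := by
      rw [hνdef, Measure.map_apply measurable_neg MeasurableSet.univ, preimage_univ]
      exact ((hUo.measure_pos μG ⟨0, hU0⟩).trans_le (measure_mono (subset_univ U))).ne'
    have hc0 : μ (Prod.mk (0 : G) ⁻¹' E) = 0 := by
      rcases mul_eq_zero.1 hconst0 with h | h
      · exact h
      · exact absurd h hνuniv
    refine measure_mono_null ?_ hc0
    rw [hEsec 0]
    rintro A ⟨⟨x, hx1, hx2⟩, hA2⟩
    exact ⟨⟨x, hx1, by simpa using hx2⟩, hA2⟩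
  refine le_antisymm (measure_mono subset_closure) ?_
  calc μ (closure (O ∩ Ω))
      ≤ μ ((O ∩ Ω) ∪ ({A : Set G | ∃ x ∈ closure A, x ∈ D} ∩ Ω)) := measure_mono hScover
    _ ≤ μ (O ∩ Ω) + μ ({A : Set G | ∃ x ∈ closure A, x ∈ D} ∩ Ω) := measure_union_le _ _
    _ = μ (O ∩ Ω) := by rw [hSnull, add_zero]
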